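/- Let p ∈ [2,∞), 0 < ε ≤ 1, s > 0, L > 0, N a positive integer, h = L/N. For all periodic grid functions ν, ξ : (ℤ/N)² → ℝ, one has ‖ξ−ν‖₂² + s · h² Σ_{vertices} ( |∇_h^v ξ|^{p−2} ∇_h^v ξ − |∇_h^v ν|^{p−2} ∇_h^v ν ) · ∇_h^v(ξ−ν) + s ε² ‖Δ_h(ξ−ν)‖₂² ≥ min(1/2, ε s^{−1/2}) · ( ‖ξ−ν‖₂² + s ‖∇_h(ξ−ν)‖₂² + s ε² ‖Δ_h(ξ−ν)‖₂² ). -/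

import Mathlib

/-- The five-point discrete Laplacian on a grid of mesh size `h`. -/
noncomputable def discLap (h : ℝ) (u : ℤ → ℤ → ℝ) (i j : ℤ) : ℝ :=
  (u (i + 1) j + u (i - 1) j + u i (j + 1) + u i (j - 1) - 4 * u i j) / h ^ 2

/-- Vertex-centered difference `𝔇_x u` at the vertex `(i+1/2, j+1/2)`. -/
noncomputable def Dxv (h : ℝ) (u : ℤ → ℤ → ℝ) (i j : ℤ) : ℝ :=
  (u (i + 1) (j + 1) - u i (j + 1) + u (i + 1) j - u i j) / (2 * h)

/-- Vertex-centered difference `𝔇_y u` at the vertex `(i+1/2, j+1/2)`. -/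
noncomputable def Dyv (h : ℝ) (u : ℤ → ℤ → ℝ) (i j : ℤ) : ℝ :=
  (u (i + 1) (j + 1) - u (i + 1) j + u i (j + 1) - u i j) / (2 * h)

/-- Length `|∇_h^v u|` of the vertex-centered gradient at the vertex `(i+1/2, j+1/2)`. -/
noncomputable def vGradNorm (h : ℝ) (u : ℤ → ℤ → ℝ) (i j : ℤ) : ℝ :=
  Real.sqrt (Dxv h u i j ^ 2 + Dyv h u i j ^ 2)

/-- The discrete squared `ℓ²` norm `h² Σ_{i,j=0}^{N-1} v_{ij}²`. -/
noncomputable def discL2sq (h : ℝ) (N : ℕ) (v : ℤ → ℤ → ℝ) : ℝ :=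
  h ^ 2 * ∑ i ∈ Finset.range N, ∑ j ∈ Finset.range N, v (i : ℤ) (j : ℤ) ^ 2

/-- The discrete squared edge-gradient norm
`‖∇_h u‖₂² = h² Σ_{i,j} ((D_x u)² + (D_y u)²)`. -/
noncomputable def discGradSq (h : ℝ) (N : ℕ) (u : ℤ → ℤ → ℝ) : ℝ :=
  h ^ 2 * ∑ i ∈ Finset.range N, ∑ j ∈ Finset.range N,
    (((u ((i : ℤ) + 1) (j : ℤ) - u (i : ℤ) (j : ℤ)) / h) ^ 2 +
      ((u (i : ℤ) ((j : ℤ) + 1) - u (i : ℤ) (j : ℤ)) / h) ^ 2)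

/-- The monotone p-Laplacian pairing
`h² Σ_{vertices} (|∇_h^v ξ|^{p-2} ∇_h^v ξ - |∇_h^v ν|^{p-2} ∇_h^v ν) · ∇_h^v (ξ - ν)`,
with the convention `|0|^{p-2}·0 = 0`. -/
noncomputable def pLapPairing (p h : ℝ) (N : ℕ) (ξ ν : ℤ → ℤ → ℝ) : ℝ :=
  h ^ 2 * ∑ i ∈ Finset.range N, ∑ j ∈ Finset.range N,
    ((vGradNorm h ξ (i : ℤ) (j : ℤ) ^ (p - 2) * Dxv h ξ (i : ℤ) (j : ℤ) -
        vGradNorm h ν (i : ℤ) (j : ℤ) ^ (p - 2) * Dxv h ν (i : ℤ) (j : ℤ)) *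
      Dxv h (fun a b => ξ a b - ν a b) (i : ℤ) (j : ℤ) +
      (vGradNorm h ξ (i : ℤ) (j : ℤ) ^ (p - 2) * Dyv h ξ (i : ℤ) (j : ℤ) -
        vGradNorm h ν (i : ℤ) (j : ℤ) ^ (p - 2) * Dyv h ν (i : ℤ) (j : ℤ)) *
      Dyv h (fun a b => ξ a b - ν a b) (i : ℤ) (j : ℤ))



lemma shift1 (N : ℕ) (F : ℤ → ℝ) (hF : ∀ x : ℤ, F (x + N) = F x) :
    ∑ i ∈ Finset.range N, F ((i : ℤ) + 1) = ∑ i ∈ Finset.range N, F (i : ℤ) := by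
  have h1 := Finset.sum_range_succ (fun n : ℕ => F (n : ℤ)) N
  have h2 := Finset.sum_range_succ' (fun n : ℕ => F (n : ℤ)) N
  have hN : F ((N : ℕ) : ℤ) = F 0 := by simpa using hF 0
  push_cast at h1 h2
  linarith

lemma shiftm1 (N : ℕ) (F : ℤ → ℝ) (hF : ∀ x : ℤ, F (x + N) = F x) :
    ∑ i ∈ Finset.range N, F ((i : ℤ) - 1) = ∑ i ∈ Finset.range N, F (i : ℤ) := by
  have key := shift1 N (fun x => F (x - 1)) (fun x => by
    have hx : x + (N : ℤ) - 1 = x - 1 + N := by ring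
    rw [hx, hF])
  simp only [add_sub_cancel_right] at key
  exact key.symm

lemma shiftx (N : ℕ) (f : ℤ → ℤ → ℝ) (hf : ∀ i j : ℤ, f (i + N) j = f i j) :
    ∑ i ∈ Finset.range N, ∑ j ∈ Finset.range N, f ((i : ℤ) + 1) (j : ℤ)
      = ∑ i ∈ Finset.range N, ∑ j ∈ Finset.range N, f (i : ℤ) (j : ℤ) :=
  shift1 N (fun x => ∑ j ∈ Finset.range N, f x (j : ℤ))
    (fun x => Finset.sum_congr rfl fun j _ => hf x j)

lemma shifty (N : ℕ) (f : ℤ → ℤ → ℝ) (hf : ∀ i j : ℤ, f i (j + N) = f i j) :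
    ∑ i ∈ Finset.range N, ∑ j ∈ Finset.range N, f (i : ℤ) ((j : ℤ) + 1)
      = ∑ i ∈ Finset.range N, ∑ j ∈ Finset.range N, f (i : ℤ) (j : ℤ) :=
  Finset.sum_congr rfl fun i _ => shift1 N (fun y => f (i : ℤ) y) (fun y => hf (i : ℤ) y)

lemma rpow_mul_self_mono {q : ℝ} (hq : 0 ≤ q) {x y : ℝ} (hx : 0 ≤ x) (hxy : x ≤ y) :
    x ^ q * x ≤ y ^ q * y :=
  mul_le_mul (Real.rpow_le_rpow hx hxy hq) hxy hx (Real.rpow_nonneg (hx.trans hxy) q)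

lemma mono2 (q : ℝ) (hq : 0 ≤ q) (a1 a2 b1 b2 : ℝ) :
    0 ≤ (Real.sqrt (a1 ^ 2 + a2 ^ 2) ^ q * a1 - Real.sqrt (b1 ^ 2 + b2 ^ 2) ^ q * b1) * (a1 - b1)
       + (Real.sqrt (a1 ^ 2 + a2 ^ 2) ^ q * a2 - Real.sqrt (b1 ^ 2 + b2 ^ 2) ^ q * b2) * (a2 - b2) := by
  set x := Real.sqrt (a1 ^ 2 + a2 ^ 2) with hxdef
  set y := Real.sqrt (b1 ^ 2 + b2 ^ 2) with hydef
  have hx : 0 ≤ x := Real.sqrt_nonneg _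
  have hy : 0 ≤ y := Real.sqrt_nonneg _
  have hx2 : x ^ 2 = a1 ^ 2 + a2 ^ 2 := Real.sq_sqrt (by positivity)
  have hy2 : y ^ 2 = b1 ^ 2 + b2 ^ 2 := Real.sq_sqrt (by positivity)
  have hc : 0 ≤ x ^ q := Real.rpow_nonneg hx q
  have hd : 0 ≤ y ^ q := Real.rpow_nonneg hy q
  have hcs : a1 * b1 + a2 * b2 ≤ x * y := by
    nlinarith [sq_nonneg (a1 * b2 - a2 * b1), mul_nonneg hx hy,
      sq_nonneg (x * y - (a1 * b1 + a2 * b2)), sq_nonneg (x * y + (a1 * b1 + a2 * b2))]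
  have hmono : 0 ≤ (x ^ q * x - y ^ q * y) * (x - y) := by
    rcases le_total x y with hxy | hxy
    · have hm := rpow_mul_self_mono hq hx hxy
      exact mul_nonneg_of_nonpos_of_nonpos (by linarith) (by linarith)
    · have hm := rpow_mul_self_mono hq hy hxy
      exact mul_nonneg (by linarith) (by linarith)
  have h1 : x ^ q * (a1 ^ 2 + a2 ^ 2) = x ^ q * x ^ 2 := by rw [hx2]
  have h2 : y ^ q * (b1 ^ 2 + b2 ^ 2) = y ^ q * y ^ 2 := by rw [hy2]
  nlinarith [mul_le_mul_of_nonneg_left hcs (by linarith : (0:ℝ) ≤ x ^ q + y ^ q), hmono, h1, h2]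

lemma sbp (N : ℕ) (u : ℤ → ℤ → ℝ)
    (hx : ∀ i j : ℤ, u (i + N) j = u i j) (hy : ∀ i j : ℤ, u i (j + N) = u i j) :
    ∑ i ∈ Finset.range N, ∑ j ∈ Finset.range N,
      ((u ((i:ℤ)+1) (j:ℤ) - u (i:ℤ) (j:ℤ))^2 + (u (i:ℤ) ((j:ℤ)+1) - u (i:ℤ) (j:ℤ))^2)
    = ∑ i ∈ Finset.range N, ∑ j ∈ Finset.range N,
      (-(u (i:ℤ) (j:ℤ) * (u ((i:ℤ)+1) (j:ℤ) + u ((i:ℤ)-1) (j:ℤ) + u (i:ℤ) ((j:ℤ)+1)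
          + u (i:ℤ) ((j:ℤ)-1) - 4 * u (i:ℤ) (j:ℤ)))) := by
  have e1 : ∑ i ∈ Finset.range N, ∑ j ∈ Finset.range N, u ((i:ℤ)+1) (j:ℤ) ^ 2
      = ∑ i ∈ Finset.range N, ∑ j ∈ Finset.range N, u (i:ℤ) (j:ℤ) ^ 2 :=
    shiftx N (fun a b => u a b ^ 2) (fun a b => by rw [hx])
  have e2 : ∑ i ∈ Finset.range N, ∑ j ∈ Finset.range N, u (i:ℤ) ((j:ℤ)+1) ^ 2
      = ∑ i ∈ Finset.range N, ∑ j ∈ Finset.range N, u (i:ℤ) (j:ℤ) ^ 2 :=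
    shifty N (fun a b => u a b ^ 2) (fun a b => by rw [hy])
  have e3 : ∑ i ∈ Finset.range N, ∑ j ∈ Finset.range N, u (i:ℤ) (j:ℤ) * u ((i:ℤ)+1) (j:ℤ)
      = ∑ i ∈ Finset.range N, ∑ j ∈ Finset.range N, u ((i:ℤ)-1) (j:ℤ) * u (i:ℤ) (j:ℤ) := by
    have key := shiftx N (fun a b => u (a-1) b * u a b) (fun a b => by
      have h1 : a + (N:ℤ) - 1 = a - 1 + N := by ring
      rw [h1, hx, hx])
    simp only [add_sub_cancel_right] at key
    exact key
  have e4 : ∑ i ∈ Finset.range N, ∑ j ∈ Finset.range N, u (i:ℤ) (j:ℤ) * u (i:ℤ) ((j:ℤ)+1)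
      = ∑ i ∈ Finset.range N, ∑ j ∈ Finset.range N, u (i:ℤ) ((j:ℤ)-1) * u (i:ℤ) (j:ℤ) := by
    have key := shifty N (fun a b => u a (b-1) * u a b) (fun a b => by
      have h1 : b + (N:ℤ) - 1 = b - 1 + N := by ring
      rw [h1, hy, hy])
    simp only [add_sub_cancel_right] at key
    exact key
  rw [← sub_eq_zero]
  simp only [← Finset.sum_sub_distrib]
  have hdec : ∀ i j : ℤ,
      ((u (i+1) j - u i j)^2 + (u i (j+1) - u i j)^2)
        - (-(u i j * (u (i+1) j + u (i-1) j + u i (j+1) + u i (j-1) - 4 * u i j)))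
      = (u (i+1) j ^ 2 - u i j ^ 2) + (u i (j+1) ^ 2 - u i j ^ 2)
        + (u (i-1) j * u i j - u i j * u (i+1) j)
        + (u i (j-1) * u i j - u i j * u i (j+1)) := fun i j => by ring
  calc ∑ i ∈ Finset.range N, ∑ j ∈ Finset.range N,
        (((u ((i:ℤ)+1) (j:ℤ) - u (i:ℤ) (j:ℤ))^2 + (u (i:ℤ) ((j:ℤ)+1) - u (i:ℤ) (j:ℤ))^2)
          - (-(u (i:ℤ) (j:ℤ) * (u ((i:ℤ)+1) (j:ℤ) + u ((i:ℤ)-1) (j:ℤ) + u (i:ℤ) ((j:ℤ)+1)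
              + u (i:ℤ) ((j:ℤ)-1) - 4 * u (i:ℤ) (j:ℤ)))))
      = ∑ i ∈ Finset.range N, ∑ j ∈ Finset.range N,
        ((u ((i:ℤ)+1) (j:ℤ) ^ 2 - u (i:ℤ) (j:ℤ) ^ 2) + (u (i:ℤ) ((j:ℤ)+1) ^ 2 - u (i:ℤ) (j:ℤ) ^ 2)
          + (u ((i:ℤ)-1) (j:ℤ) * u (i:ℤ) (j:ℤ) - u (i:ℤ) (j:ℤ) * u ((i:ℤ)+1) (j:ℤ))
          + (u (i:ℤ) ((j:ℤ)-1) * u (i:ℤ) (j:ℤ) - u (i:ℤ) (j:ℤ) * u (i:ℤ) ((j:ℤ)+1))) := by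
        exact Finset.sum_congr rfl fun i _ => Finset.sum_congr rfl fun j _ => hdec _ _
    _ = 0 := by
        simp only [Finset.sum_add_distrib, Finset.sum_sub_distrib]
        linarith

lemma Dxv_sub (h : ℝ) (ξ ν : ℤ → ℤ → ℝ) (i j : ℤ) :
    Dxv h (fun a b => ξ a b - ν a b) i j = Dxv h ξ i j - Dxv h ν i j := by
  unfold Dxv; ring

lemma Dyv_sub (h : ℝ) (ξ ν : ℤ → ℤ → ℝ) (i j : ℤ) :
    Dyv h (fun a b => ξ a b - ν a b) i j = Dyv h ξ i j - Dyv h ν i j := by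
  unfold Dyv; ring

/-- (Lemma 5.1: discrete (L4) estimate for the fourth-order problem.)
Let `p ∈ [2,∞)`, `0 < ε ≤ 1`, `s > 0`, `L > 0`, `N > 0`, `h = L/N`.  For all `N`-periodic
grid functions `ν, ξ : (ℤ/N)² → ℝ`,
`‖ξ−ν‖₂² + s·(p-Laplacian pairing) + sε²‖Δ_h(ξ−ν)‖₂²
  ≥ min(1/2, ε s^{−1/2}) (‖ξ−ν‖₂² + s‖∇_h(ξ−ν)‖₂² + sε²‖Δ_h(ξ−ν)‖₂²)`. -/
theorem statement19 (p : ℝ) (hp : 2 ≤ p) (ε s L : ℝ) (hε : 0 < ε) (hε1 : ε ≤ 1)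
    (hs : 0 < s) (hL : 0 < L) (N : ℕ) (hN : 0 < N) (h : ℝ) (hh : h = L / N)
    (ν ξ : ℤ → ℤ → ℝ)
    (hνper : ∀ i j : ℤ, ν (i + (N : ℤ)) j = ν i j ∧ ν i (j + (N : ℤ)) = ν i j)
    (hξper : ∀ i j : ℤ, ξ (i + (N : ℤ)) j = ξ i j ∧ ξ i (j + (N : ℤ)) = ξ i j) :
    min (1 / 2) (ε * s ^ (-(1 : ℝ) / 2)) *
        (discL2sq h N (fun a b => ξ a b - ν a b) +
          s * discGradSq h N (fun a b => ξ a b - ν a b) +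
          s * ε ^ 2 * discL2sq h N (discLap h (fun a b => ξ a b - ν a b))) ≤
      discL2sq h N (fun a b => ξ a b - ν a b) +
        s * pLapPairing p h N ξ ν +
        s * ε ^ 2 * discL2sq h N (discLap h (fun a b => ξ a b - ν a b)) := by
  have hh0 : 0 < h := by rw [hh]; positivity
  have hhne : h ≠ 0 := ne_of_gt hh0
  set u : ℤ → ℤ → ℝ := fun a b => ξ a b - ν a b with hu
  have hux : ∀ i j : ℤ, u (i + N) j = u i j := fun i j => by
    simp only [hu, (hξper i j).1, (hνper i j).1]
  have huy : ∀ i j : ℤ, u i (j + N) = u i j := fun i j => by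
    simp only [hu, (hξper i j).2, (hνper i j).2]
  set A := discL2sq h N u with hAdef
  set D := discL2sq h N (discLap h u) with hDdef
  set G := discGradSq h N u with hGdef
  set P := pLapPairing p h N ξ ν with hPdef
  set t := ε * Real.sqrt s with htdef
  set m := min (1 / 2 : ℝ) (ε * s ^ (-(1 : ℝ) / 2)) with hmdef
  have hA : 0 ≤ A := by rw [hAdef]; unfold discL2sq; positivity
  have hD : 0 ≤ D := by rw [hDdef]; unfold discL2sq; positivity
  have hG : 0 ≤ G := by rw [hGdef]; unfold discGradSq; positivity
  have hP : 0 ≤ P := by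
    rw [hPdef]; unfold pLapPairing
    apply mul_nonneg (by positivity)
    refine Finset.sum_nonneg fun i _ => Finset.sum_nonneg fun j _ => ?_
    rw [Dxv_sub, Dyv_sub]
    have hm2 := mono2 (p - 2) (by linarith) (Dxv h ξ (i:ℤ) (j:ℤ)) (Dyv h ξ (i:ℤ) (j:ℤ))
      (Dxv h ν (i:ℤ) (j:ℤ)) (Dyv h ν (i:ℤ) (j:ℤ))
    simpa [vGradNorm] using hm2
  -- summation by parts and conversion
  have hGplain : G = ∑ i ∈ Finset.range N, ∑ j ∈ Finset.range N,
      ((u ((i:ℤ)+1) (j:ℤ) - u (i:ℤ) (j:ℤ))^2 + (u (i:ℤ) ((j:ℤ)+1) - u (i:ℤ) (j:ℤ))^2) := by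
    rw [hGdef]; unfold discGradSq
    rw [Finset.mul_sum]
    refine Finset.sum_congr rfl fun i _ => ?_
    rw [Finset.mul_sum]
    refine Finset.sum_congr rfl fun j _ => ?_
    field_simp
  have hGS : G = h ^ 2 * ∑ i ∈ Finset.range N, ∑ j ∈ Finset.range N,
      (-(u (i:ℤ) (j:ℤ) * discLap h u (i:ℤ) (j:ℤ))) := by
    rw [hGplain, sbp N u hux huy, Finset.mul_sum]
    refine Finset.sum_congr rfl fun i _ => ?_
    rw [Finset.mul_sum]
    refine Finset.sum_congr rfl fun j _ => ?_
    unfold discLap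
    field_simp
  have ht : 0 < t := mul_pos hε (Real.sqrt_pos.2 hs)
  have key : 2 * t * G ≤ A + t ^ 2 * D := by
    have hsum : ∑ i ∈ Finset.range N, ∑ j ∈ Finset.range N,
        (2 * t * (-(u (i:ℤ) (j:ℤ) * discLap h u (i:ℤ) (j:ℤ))))
        ≤ ∑ i ∈ Finset.range N, ∑ j ∈ Finset.range N,
        (u (i:ℤ) (j:ℤ) ^ 2 + t ^ 2 * discLap h u (i:ℤ) (j:ℤ) ^ 2) := by
      refine Finset.sum_le_sum fun i _ => Finset.sum_le_sum fun j _ => ?_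
      nlinarith [sq_nonneg (u (i:ℤ) (j:ℤ) + t * discLap h u (i:ℤ) (j:ℤ))]
    have hmul := mul_le_mul_of_nonneg_left hsum (sq_nonneg h)
    have eL : h ^ 2 * ∑ i ∈ Finset.range N, ∑ j ∈ Finset.range N,
        (2 * t * (-(u (i:ℤ) (j:ℤ) * discLap h u (i:ℤ) (j:ℤ)))) = 2 * t * G := by
      rw [hGS]; simp only [← Finset.mul_sum]; ring
    have eR : h ^ 2 * ∑ i ∈ Finset.range N, ∑ j ∈ Finset.range N,
        (u (i:ℤ) (j:ℤ) ^ 2 + t ^ 2 * discLap h u (i:ℤ) (j:ℤ) ^ 2) = A + t ^ 2 * D := by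
      rw [hAdef, hDdef]; unfold discL2sq
      simp only [Finset.sum_add_distrib, ← Finset.mul_sum]
      ring
    rw [eL, eR] at hmul
    exact hmul
  have hm1 : m ≤ 1 / 2 := min_le_left _ _
  have hm2' : m ≤ ε * s ^ (-(1 : ℝ) / 2) := min_le_right _ _
  have hm0 : 0 ≤ m :=
    le_min (by norm_num) (mul_nonneg hε.le (Real.rpow_nonneg hs.le _))
  have hts : ε * s ^ (-(1 : ℝ) / 2) * s = t := by
    rw [htdef, show (-(1:ℝ)/2) = -(1/2) by norm_num, Real.rpow_neg hs.le,
      ← Real.sqrt_eq_rpow]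
    have h1 : (Real.sqrt s)⁻¹ * s = Real.sqrt s := by
      rw [inv_mul_eq_div, Real.div_sqrt]
    rw [mul_assoc, h1]
  have hmst : m * s ≤ t := by
    calc m * s ≤ (ε * s ^ (-(1 : ℝ) / 2)) * s := mul_le_mul_of_nonneg_right hm2' hs.le
      _ = t := hts
  have ht2 : t ^ 2 = ε ^ 2 * s := by rw [htdef, mul_pow, Real.sq_sqrt hs.le]
  have ht2D : t ^ 2 * D = ε ^ 2 * s * D := by rw [ht2]
  nlinarith [mul_le_mul_of_nonneg_right hm1 hA,
    mul_le_mul_of_nonneg_right hm1 (mul_nonneg (mul_nonneg hs.le (sq_nonneg ε)) hD),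
    mul_le_mul_of_nonneg_right hmst hG, key, ht2D, mul_nonneg hs.le hP, hG, hm0, hs.le]
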